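/- Let Y be a finite nonempty type, Z a measurable space, p, q : Y → ℝ≥0 two label distributions, and (μ_y)_{y∈Y}, (ν_y)_{y∈Y} two families of probability measures on Z. Let M ≥ 0 and let L : Y → Z → ℝ be a family of measurable loss functions with 0 ≤ L_y(z) ≤ M for all y, z. Then the risks under the two mixture joints satisfy |Σ_y p(y)·∫ L_y dμ_y − Σ_y q(y)·∫ L_y dν_y| ≤ 2M·( d_TV(p, q) + min( Σ_y p(y)·d_TV(μ_y, ν_y), Σ_y q(y)·d_TV(μ_y, ν_y) ) ), where d_TV(p,q) = (1/2)·Σ_y |p(y) − q(y)| and d_TV(μ_y, ν_y) = sup over measurable A ⊆ Z of |μ_y(A) − ν_y(A)|. -/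

import Mathlib

open MeasureTheory

/-- Total variation distance between two measures: the supremum over measurable sets of the
absolute difference of their (real-valued) masses. -/
noncomputable def tvDist {W : Type*} [MeasurableSpace W] (μ ν : Measure W) : ℝ :=
  ⨆ A : {A : Set W // MeasurableSet A}, |(μ A.1).toReal - (ν A.1).toReal|

/-- Total variation distance between two label distributions on a finite label space. -/
noncomputable def tvLabel {Y : Type*} [Fintype Y] (p q : Y → NNReal) : ℝ :=
  (1 / 2) * ∑ y, |(p y : ℝ) - (q y : ℝ)|

section Aux

variable {W : Type*} [MeasurableSpace W]

lemma abs_le_tvDist (μ ν : Measure W) [IsFiniteMeasure μ] [IsFiniteMeasure ν]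
    {A : Set W} (hA : MeasurableSet A) :
    |(μ A).toReal - (ν A).toReal| ≤ tvDist μ ν := by
  have hbdd : BddAbove (Set.range fun A : {A : Set W // MeasurableSet A} =>
      |(μ A.1).toReal - (ν A.1).toReal|) := by
    refine ⟨(μ Set.univ).toReal + (ν Set.univ).toReal, ?_⟩
    rintro x ⟨B, rfl⟩
    have h1 : (μ B.1).toReal ≤ (μ Set.univ).toReal :=
      ENNReal.toReal_mono (measure_ne_top _ _) (measure_mono (Set.subset_univ _))
    have h2 : (ν B.1).toReal ≤ (ν Set.univ).toReal :=
      ENNReal.toReal_mono (measure_ne_top _ _) (measure_mono (Set.subset_univ _))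
    calc |(μ B.1).toReal - (ν B.1).toReal| ≤ |(μ B.1).toReal| + |(ν B.1).toReal| :=
          abs_sub _ _
      _ ≤ (μ Set.univ).toReal + (ν Set.univ).toReal := by
          rw [abs_of_nonneg ENNReal.toReal_nonneg, abs_of_nonneg ENNReal.toReal_nonneg]
          exact add_le_add h1 h2
  exact le_ciSup hbdd (⟨A, hA⟩ : {A : Set W // MeasurableSet A})

lemma tvDist_nonneg (μ ν : Measure W) [IsFiniteMeasure μ] [IsFiniteMeasure ν] :
    0 ≤ tvDist μ ν := by
  have := abs_le_tvDist μ ν MeasurableSet.empty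
  simpa using this

lemma integrable_of_bounded' (μ : Measure W) [IsFiniteMeasure μ] {L : W → ℝ} {M : ℝ}
    (hm : Measurable L) (h0 : ∀ z, 0 ≤ L z) (hM : ∀ z, L z ≤ M) : Integrable L μ :=
  ⟨hm.aestronglyMeasurable, HasFiniteIntegral.of_bounded (C := M)
    (Filter.Eventually.of_forall fun z => by
      rw [Real.norm_eq_abs, abs_of_nonneg (h0 z)]; exact hM z)⟩

/-- For finite measures with `ν ≤ μ` and `0 ≤ L ≤ M`, the difference of integrals is
between `0` and `M * (μ univ - ν univ)`. -/
lemma integral_sub_integral_bounds (μ ν : Measure W) [IsFiniteMeasure μ] [IsFiniteMeasure ν]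
    (hle : ν ≤ μ) {L : W → ℝ} {M : ℝ}
    (hm : Measurable L) (h0 : ∀ z, 0 ≤ L z) (hM : ∀ z, L z ≤ M) :
    0 ≤ (∫ z, L z ∂μ) - (∫ z, L z ∂ν) ∧
      (∫ z, L z ∂μ) - (∫ z, L z ∂ν) ≤ M * ((μ Set.univ).toReal - (ν Set.univ).toReal) := by
  set ρ : Measure W := μ - ν with hρ
  have hsum : ρ + ν = μ := Measure.sub_add_cancel_of_le hle
  have hμeq : (∫ z, L z ∂μ) = (∫ z, L z ∂ρ) + (∫ z, L z ∂ν) := by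
    rw [← hsum, integral_add_measure (integrable_of_bounded' ρ hm h0 hM)
      (integrable_of_bounded' ν hm h0 hM)]
  have hdiff : (∫ z, L z ∂μ) - (∫ z, L z ∂ν) = ∫ z, L z ∂ρ := by
    rw [hμeq]; ring
  have hρuniv : ρ Set.univ = μ Set.univ - ν Set.univ :=
    Measure.sub_apply MeasurableSet.univ hle
  have hρtoReal : (ρ Set.univ).toReal = (μ Set.univ).toReal - (ν Set.univ).toReal := by
    rw [hρuniv, ENNReal.toReal_sub_of_le (Measure.le_iff'.mp hle Set.univ) (measure_ne_top _ _)]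
  constructor
  · rw [hdiff]; exact integral_nonneg h0
  · rw [hdiff, ← hρtoReal]
    calc (∫ z, L z ∂ρ) ≤ ∫ _, M ∂ρ :=
          integral_mono (integrable_of_bounded' ρ hm h0 hM) (integrable_const M) hM
      _ = (ρ Set.univ).toReal * M := by rw [integral_const]; simp [smul_eq_mul, measureReal_def]
      _ = M * (ρ Set.univ).toReal := mul_comm _ _

/-- Key lemma: for finite measures and `0 ≤ L ≤ M` measurable, the gap of integrals is at
most `M * tvDist μ ν`. -/
lemma abs_integral_sub_le_tvDist (μ ν : Measure W) [IsFiniteMeasure μ] [IsFiniteMeasure ν]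
    {L : W → ℝ} {M : ℝ} (hMnn : 0 ≤ M)
    (hm : Measurable L) (h0 : ∀ z, 0 ≤ L z) (hM : ∀ z, L z ≤ M) :
    |(∫ z, L z ∂μ) - (∫ z, L z ∂ν)| ≤ M * tvDist μ ν := by
  obtain ⟨S, hS, hpos, hneg⟩ :=
    (μ.toSignedMeasure - ν.toSignedMeasure).exists_compl_positive_negative
  -- on `S`, `ν ≤ μ`; on `Sᶜ`, `μ ≤ ν`
  have key : ∀ (T : Set W), MeasurableSet T →
      (0 ≤[T] (μ.toSignedMeasure - ν.toSignedMeasure)) → ν.restrict T ≤ μ.restrict T := by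
    intro T hT hTpos
    refine Measure.le_iff.mpr fun A hA => ?_
    rw [Measure.restrict_apply hA, Measure.restrict_apply hA]
    have := (VectorMeasure.restrict_le_restrict_iff _ _ hT).mp hTpos
      (hA.inter hT) Set.inter_subset_right
    rw [VectorMeasure.sub_apply, VectorMeasure.zero_apply,
      Measure.toSignedMeasure_apply_measurable (hA.inter hT),
      Measure.toSignedMeasure_apply_measurable (hA.inter hT)] at this
    have h' : (ν (A ∩ T)).toReal ≤ (μ (A ∩ T)).toReal := by rw [measureReal_def, measureReal_def] at this; linarith
    exact (ENNReal.toReal_le_toReal (measure_ne_top _ _) (measure_ne_top _ _)).mp h'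
  have key' : ∀ (T : Set W), MeasurableSet T →
      ((μ.toSignedMeasure - ν.toSignedMeasure) ≤[T] 0) → μ.restrict T ≤ ν.restrict T := by
    intro T hT hTneg
    refine Measure.le_iff.mpr fun A hA => ?_
    rw [Measure.restrict_apply hA, Measure.restrict_apply hA]
    have := (VectorMeasure.restrict_le_restrict_iff _ _ hT).mp hTneg
      (hA.inter hT) Set.inter_subset_right
    rw [VectorMeasure.sub_apply, VectorMeasure.zero_apply,
      Measure.toSignedMeasure_apply_measurable (hA.inter hT),
      Measure.toSignedMeasure_apply_measurable (hA.inter hT)] at this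
    have h' : (μ (A ∩ T)).toReal ≤ (ν (A ∩ T)).toReal := by rw [measureReal_def, measureReal_def] at this; linarith
    exact (ENNReal.toReal_le_toReal (measure_ne_top _ _) (measure_ne_top _ _)).mp h'
  have hνμ : ν.restrict S ≤ μ.restrict S := key S hS hpos
  have hμν : μ.restrict Sᶜ ≤ ν.restrict Sᶜ := key' Sᶜ hS.compl hneg
  obtain ⟨hd1₀, hd1⟩ := integral_sub_integral_bounds (μ.restrict S) (ν.restrict S) hνμ hm h0 hM
  obtain ⟨hd2₀, hd2⟩ := integral_sub_integral_bounds (ν.restrict Sᶜ) (μ.restrict Sᶜ) hμν hm h0 hM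
  have hsplitμ : (∫ z, L z ∂μ) = (∫ z, L z ∂(μ.restrict S)) + (∫ z, L z ∂(μ.restrict Sᶜ)) := by
    conv_lhs => rw [← Measure.restrict_add_restrict_compl (μ := μ) hS]
    exact integral_add_measure (integrable_of_bounded' _ hm h0 hM)
      (integrable_of_bounded' _ hm h0 hM)
  have hsplitν : (∫ z, L z ∂ν) = (∫ z, L z ∂(ν.restrict S)) + (∫ z, L z ∂(ν.restrict Sᶜ)) := by
    conv_lhs => rw [← Measure.restrict_add_restrict_compl (μ := ν) hS]
    exact integral_add_measure (integrable_of_bounded' _ hm h0 hM)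
      (integrable_of_bounded' _ hm h0 hM)
  set d1 := (∫ z, L z ∂(μ.restrict S)) - (∫ z, L z ∂(ν.restrict S)) with hd1def
  set d2 := (∫ z, L z ∂(ν.restrict Sᶜ)) - (∫ z, L z ∂(μ.restrict Sᶜ)) with hd2def
  have hdiff : (∫ z, L z ∂μ) - (∫ z, L z ∂ν) = d1 - d2 := by
    rw [hsplitμ, hsplitν]; ring
  have htv1 : d1 ≤ M * tvDist μ ν := by
    refine hd1.trans ?_
    rw [Measure.restrict_apply_univ, Measure.restrict_apply_univ]
    refine mul_le_mul_of_nonneg_left ((le_abs_self _).trans ?_) hMnn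
    exact abs_le_tvDist μ ν hS
  have htv2 : d2 ≤ M * tvDist μ ν := by
    refine hd2.trans ?_
    rw [Measure.restrict_apply_univ, Measure.restrict_apply_univ]
    refine mul_le_mul_of_nonneg_left ((le_abs_self _).trans ?_) hMnn
    rw [abs_sub_comm]
    exact abs_le_tvDist μ ν hS.compl
  rw [hdiff, abs_sub_le_iff]
  constructor
  · linarith
  · linarith

end Aux

theorem risk_gap_le_label_shift_add_conditional_shift
    {Y : Type*} [Fintype Y] [Nonempty Y] {Z : Type*} [MeasurableSpace Z]
    (p q : Y → NNReal) (hp : ∑ y, p y = 1) (hq : ∑ y, q y = 1)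
    (μ ν : Y → Measure Z)
    (hμ : ∀ y, IsProbabilityMeasure (μ y)) (hν : ∀ y, IsProbabilityMeasure (ν y))
    (M : ℝ) (hM : 0 ≤ M)
    (L : Y → Z → ℝ) (hLm : ∀ y, Measurable (L y))
    (hL0 : ∀ y z, 0 ≤ L y z) (hLM : ∀ y z, L y z ≤ M) :
    |∑ y, (p y : ℝ) * ∫ z, L y z ∂(μ y) - ∑ y, (q y : ℝ) * ∫ z, L y z ∂(ν y)| ≤
      2 * M * (tvLabel p q +
        min (∑ y, (p y : ℝ) * tvDist (μ y) (ν y)) (∑ y, (q y : ℝ) * tvDist (μ y) (ν y))) := by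
  haveI := hμ; haveI := hν
  -- integral bounds
  have hint0 : ∀ y, 0 ≤ ∫ z, L y z ∂(μ y) := fun y => integral_nonneg (hL0 y)
  have hintM : ∀ y, (∫ z, L y z ∂(μ y)) ≤ M := fun y => by
    calc (∫ z, L y z ∂(μ y)) ≤ ∫ _, M ∂(μ y) :=
          integral_mono (integrable_of_bounded' _ (hLm y) (hL0 y) (hLM y))
            (integrable_const M) (hLM y)
      _ = M := by simp
  have hint0' : ∀ y, 0 ≤ ∫ z, L y z ∂(ν y) := fun y => integral_nonneg (hL0 y)
  have hintM' : ∀ y, (∫ z, L y z ∂(ν y)) ≤ M := fun y => by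
    calc (∫ z, L y z ∂(ν y)) ≤ ∫ _, M ∂(ν y) :=
          integral_mono (integrable_of_bounded' _ (hLm y) (hL0 y) (hLM y))
            (integrable_const M) (hLM y)
      _ = M := by simp
  have htv : ∀ y, |(∫ z, L y z ∂(μ y)) - (∫ z, L y z ∂(ν y))| ≤ M * tvDist (μ y) (ν y) :=
    fun y => abs_integral_sub_le_tvDist (μ y) (ν y) hM (hLm y) (hL0 y) (hLM y)
  -- two decompositions
  have split1 : ∑ y, (p y : ℝ) * ∫ z, L y z ∂(μ y) - ∑ y, (q y : ℝ) * ∫ z, L y z ∂(ν y)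
      = ∑ y, ((p y : ℝ) - (q y : ℝ)) * ∫ z, L y z ∂(μ y)
        + ∑ y, (q y : ℝ) * ((∫ z, L y z ∂(μ y)) - (∫ z, L y z ∂(ν y))) := by
    rw [← Finset.sum_add_distrib, ← Finset.sum_sub_distrib]
    congr 1; ext y; ring
  have split2 : ∑ y, (p y : ℝ) * ∫ z, L y z ∂(μ y) - ∑ y, (q y : ℝ) * ∫ z, L y z ∂(ν y)
      = ∑ y, ((p y : ℝ) - (q y : ℝ)) * ∫ z, L y z ∂(ν y)
        + ∑ y, (p y : ℝ) * ((∫ z, L y z ∂(μ y)) - (∫ z, L y z ∂(ν y))) := by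
    rw [← Finset.sum_add_distrib, ← Finset.sum_sub_distrib]
    congr 1; ext y; ring
  -- label shift term
  have hlabelμ : |∑ y, ((p y : ℝ) - (q y : ℝ)) * ∫ z, L y z ∂(μ y)| ≤ 2 * M * tvLabel p q := by
    calc |∑ y, ((p y : ℝ) - (q y : ℝ)) * ∫ z, L y z ∂(μ y)|
        ≤ ∑ y, |((p y : ℝ) - (q y : ℝ)) * ∫ z, L y z ∂(μ y)| :=
          Finset.abs_sum_le_sum_abs _ _
      _ ≤ ∑ y, |(p y : ℝ) - (q y : ℝ)| * M := by
          refine Finset.sum_le_sum fun y _ => ?_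
          rw [abs_mul]
          exact mul_le_mul_of_nonneg_left
            (by rw [abs_of_nonneg (hint0 y)]; exact hintM y) (abs_nonneg _)
      _ = 2 * M * tvLabel p q := by
          rw [tvLabel, ← Finset.sum_mul]; ring
  have hlabelν : |∑ y, ((p y : ℝ) - (q y : ℝ)) * ∫ z, L y z ∂(ν y)| ≤ 2 * M * tvLabel p q := by
    calc |∑ y, ((p y : ℝ) - (q y : ℝ)) * ∫ z, L y z ∂(ν y)|
        ≤ ∑ y, |((p y : ℝ) - (q y : ℝ)) * ∫ z, L y z ∂(ν y)| :=
          Finset.abs_sum_le_sum_abs _ _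
      _ ≤ ∑ y, |(p y : ℝ) - (q y : ℝ)| * M := by
          refine Finset.sum_le_sum fun y _ => ?_
          rw [abs_mul]
          exact mul_le_mul_of_nonneg_left
            (by rw [abs_of_nonneg (hint0' y)]; exact hintM' y) (abs_nonneg _)
      _ = 2 * M * tvLabel p q := by
          rw [tvLabel, ← Finset.sum_mul]; ring
  -- conditional shift terms
  have hcondq : |∑ y, (q y : ℝ) * ((∫ z, L y z ∂(μ y)) - (∫ z, L y z ∂(ν y)))|
      ≤ M * ∑ y, (q y : ℝ) * tvDist (μ y) (ν y) := by
    calc |∑ y, (q y : ℝ) * ((∫ z, L y z ∂(μ y)) - (∫ z, L y z ∂(ν y)))|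
        ≤ ∑ y, |(q y : ℝ) * ((∫ z, L y z ∂(μ y)) - (∫ z, L y z ∂(ν y)))| :=
          Finset.abs_sum_le_sum_abs _ _
      _ ≤ ∑ y, (q y : ℝ) * (M * tvDist (μ y) (ν y)) := by
          refine Finset.sum_le_sum fun y _ => ?_
          rw [abs_mul, abs_of_nonneg (q y).coe_nonneg]
          exact mul_le_mul_of_nonneg_left (htv y) (q y).coe_nonneg
      _ = M * ∑ y, (q y : ℝ) * tvDist (μ y) (ν y) := by
          rw [Finset.mul_sum]; congr 1; ext y; ring
  have hcondp : |∑ y, (p y : ℝ) * ((∫ z, L y z ∂(μ y)) - (∫ z, L y z ∂(ν y)))|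
      ≤ M * ∑ y, (p y : ℝ) * tvDist (μ y) (ν y) := by
    calc |∑ y, (p y : ℝ) * ((∫ z, L y z ∂(μ y)) - (∫ z, L y z ∂(ν y)))|
        ≤ ∑ y, |(p y : ℝ) * ((∫ z, L y z ∂(μ y)) - (∫ z, L y z ∂(ν y)))| :=
          Finset.abs_sum_le_sum_abs _ _
      _ ≤ ∑ y, (p y : ℝ) * (M * tvDist (μ y) (ν y)) := by
          refine Finset.sum_le_sum fun y _ => ?_
          rw [abs_mul, abs_of_nonneg (p y).coe_nonneg]
          exact mul_le_mul_of_nonneg_left (htv y) (p y).coe_nonneg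
      _ = M * ∑ y, (p y : ℝ) * tvDist (μ y) (ν y) := by
          rw [Finset.mul_sum]; congr 1; ext y; ring
  -- combine
  have hb1 : |∑ y, (p y : ℝ) * ∫ z, L y z ∂(μ y) - ∑ y, (q y : ℝ) * ∫ z, L y z ∂(ν y)|
      ≤ 2 * M * tvLabel p q + M * ∑ y, (q y : ℝ) * tvDist (μ y) (ν y) := by
    rw [split1]
    exact (abs_add_le _ _).trans (add_le_add hlabelμ hcondq)
  have hb2 : |∑ y, (p y : ℝ) * ∫ z, L y z ∂(μ y) - ∑ y, (q y : ℝ) * ∫ z, L y z ∂(ν y)|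
      ≤ 2 * M * tvLabel p q + M * ∑ y, (p y : ℝ) * tvDist (μ y) (ν y) := by
    rw [split2]
    exact (abs_add_le _ _).trans (add_le_add hlabelν hcondp)
  have hminnn : 0 ≤ min (∑ y, (p y : ℝ) * tvDist (μ y) (ν y))
      (∑ y, (q y : ℝ) * tvDist (μ y) (ν y)) := by
    refine le_min ?_ ?_ <;>
      exact Finset.sum_nonneg fun y _ =>
        mul_nonneg (NNReal.coe_nonneg _) (tvDist_nonneg _ _)
  have hmin : |∑ y, (p y : ℝ) * ∫ z, L y z ∂(μ y) - ∑ y, (q y : ℝ) * ∫ z, L y z ∂(ν y)|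
      ≤ 2 * M * tvLabel p q + M * min (∑ y, (p y : ℝ) * tvDist (μ y) (ν y))
        (∑ y, (q y : ℝ) * tvDist (μ y) (ν y)) := by
    rcases min_cases (∑ y, (p y : ℝ) * tvDist (μ y) (ν y))
      (∑ y, (q y : ℝ) * tvDist (μ y) (ν y)) with ⟨h, _⟩ | ⟨h, _⟩
    · rw [h]; exact hb2
    · rw [h]; exact hb1
  refine hmin.trans ?_
  have : M * min (∑ y, (p y : ℝ) * tvDist (μ y) (ν y)) (∑ y, (q y : ℝ) * tvDist (μ y) (ν y))
      ≤ 2 * M * min (∑ y, (p y : ℝ) * tvDist (μ y) (ν y))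
        (∑ y, (q y : ℝ) * tvDist (μ y) (ν y)) := by
    nlinarith
  linarith [this]
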